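/- For every finite set Γ ∪ {α} of formulas, the following are equivalent: (1) for every tetravalent modal algebra A and every valuation w of the propositional variables in A, the meet of {w(γ) : γ ∈ Γ} is ≤ w(α) (the meet being 1 when Γ is empty); (2) for every valuation v into M4m, if v(γ) ∈ {b, 1} for all γ ∈ Γ, then v(α) ∈ {b, 1}. That is, the degree-preserving logic TML is determined by the single matrix ⟨M4m, {b, 1}⟩. -/

import Mathlib

/-- A tetravalent modal algebra (TMA): a bounded distributive lattice with a
De Morgan negation `neg` and a modal operator `box` satisfying
`□a ⊓ ¬a = 0` and `¬□a ⊓ a = ¬a ⊓ a`. -/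
class TMA (A : Type*) extends DistribLattice A, BoundedOrder A where
  neg : A → A
  box : A → A
  neg_neg : ∀ a : A, neg (neg a) = a
  neg_sup : ∀ a b : A, neg (a ⊔ b) = neg a ⊓ neg b
  box_inf_neg : ∀ a : A, box a ⊓ neg a = ⊥
  neg_box_inf : ∀ a : A, neg (box a) ⊓ a = neg a ⊓ a

/-- The four-element algebra `M4m`, realized on `Bool × Bool` (componentwise lattice
order), with `0 = (false,false)`, `n = (true,false)`, `b = (false,true)`,
`1 = (true,true)`; `n` and `b` are incomparable, `n ⊓ b = 0`, `n ⊔ b = 1`. -/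
abbrev M4 : Type := Bool × Bool
def M4.zero : M4 := (false, false)
def M4.n : M4 := (true, false)
def M4.b : M4 := (false, true)
def M4.one : M4 := (true, true)

/-- `M4m` as a tetravalent modal algebra: `¬0 = 1`, `¬1 = 0`, `¬n = n`, `¬b = b`,
`□1 = 1` and `□0 = □n = □b = 0`. -/
instance : TMA M4 :=
  { (inferInstance : DistribLattice M4), (inferInstance : BoundedOrder M4) with
    neg := fun p => (!p.2, !p.1)
    box := fun p => if p = M4.one then M4.one else M4.zero
    neg_neg := by decide
    neg_sup := by decide
    box_inf_neg := by decide
    neg_box_inf := by decide }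

/-- Formulas of the tetravalent modal logic TML, in the language `∧, ∨, ¬, □, ⊥`,
over a countable set of propositional variables. -/
inductive Fm : Type
  | var : ℕ → Fm
  | bot : Fm
  | and : Fm → Fm → Fm
  | or : Fm → Fm → Fm
  | not : Fm → Fm
  | box : Fm → Fm

/-- The homomorphic extension of a valuation `v` of the propositional variables
in a TMA `A` to all formulas. -/
def Fm.val {A : Type*} [TMA A] (v : ℕ → A) : Fm → A
  | .var p => v p
  | .bot => ⊥
  | .and α β => Fm.val v α ⊓ Fm.val v β
  | .or α β => Fm.val v α ⊔ Fm.val v β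
  | .not α => TMA.neg (Fm.val v α)
  | .box α => TMA.box (Fm.val v α)

section Aux
open TMA
variable {A : Type*} [TMA A]

lemma tma_neg_le {a b : A} (h : a ≤ b) : neg b ≤ neg a := by
  have h2 : neg (a ⊔ b) = neg a ⊓ neg b := neg_sup a b
  rw [sup_eq_right.mpr h] at h2
  rw [h2]; exact inf_le_left

lemma tma_neg_inj {a b : A} (h : neg a = neg b) : a = b := by
  have := congrArg neg h; rwa [TMA.neg_neg, TMA.neg_neg] at this

lemma tma_neg_inf (a b : A) : neg (a ⊓ b) = neg a ⊔ neg b := by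
  apply tma_neg_inj
  rw [TMA.neg_sup, TMA.neg_neg, TMA.neg_neg, TMA.neg_neg]

lemma tma_neg_top : neg (⊤ : A) = ⊥ := by
  apply le_antisymm _ bot_le
  have := tma_neg_le (le_top (a := neg (⊥ : A)))
  rwa [TMA.neg_neg] at this

lemma tma_neg_bot : neg (⊥ : A) = ⊤ := by
  apply tma_neg_inj; rw [TMA.neg_neg, tma_neg_top]

lemma tma_box_sup_neg (a : A) : box a ⊔ neg a = a ⊔ neg a := by
  have := congrArg neg (neg_box_inf a)
  rwa [tma_neg_inf, tma_neg_inf, TMA.neg_neg, TMA.neg_neg] at this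

lemma tma_box_le (a : A) : box a ≤ a := by
  have h1 : box a ≤ a ⊔ neg a := by
    rw [← tma_box_sup_neg]; exact le_sup_left
  have h2 : box a = (box a ⊓ a) ⊔ (box a ⊓ neg a) := by
    rw [← inf_sup_left, inf_eq_left.mpr h1]
  rw [box_inf_neg, sup_bot_eq] at h2
  rw [h2]; exact inf_le_right

lemma tma_box_inf_negbox (a : A) : box a ⊓ neg (box a) = ⊥ := by
  have h := congrArg (fun t => t ⊓ box a) (neg_box_inf a)
  have hL : neg (box a) ⊓ a ⊓ box a = box a ⊓ neg (box a) := by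
    rw [inf_assoc, inf_eq_right.mpr (tma_box_le a)]
    exact inf_comm _ _
  have hR : neg a ⊓ a ⊓ box a = ⊥ := by
    have hle : neg a ⊓ a ⊓ box a ≤ box a ⊓ neg a :=
      le_inf inf_le_right (le_trans inf_le_left inf_le_left)
    rw [box_inf_neg] at hle
    exact le_bot_iff.mp hle
  rw [hL, hR] at h; exact h

lemma tma_box_sup_negbox (a : A) : box a ⊔ neg (box a) = ⊤ := by
  apply tma_neg_inj
  rw [TMA.neg_sup, TMA.neg_neg, tma_neg_top, inf_comm]
  exact tma_box_inf_negbox a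

lemma box_mem_iff (J : Order.Ideal A) (hJ : J.IsPrime) (x : A) :
    box x ∈ J ↔ (x ∈ J ∨ neg x ∉ J) := by
  constructor
  · intro h
    by_contra hc
    push_neg at hc
    obtain ⟨hx, hnx⟩ := hc
    have hs : box x ⊔ neg x ∈ J := Order.Ideal.sup_mem h hnx
    rw [tma_box_sup_neg] at hs
    exact hx (J.lower le_sup_left hs)
  · rintro (h | h)
    · exact J.lower (tma_box_le x) h
    · have hm : box x ⊓ neg x ∈ J := by rw [box_inf_neg]; exact J.bot_mem
      rcases hJ.mem_or_mem hm with h' | h'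
      · exact h'
      · exact absurd h' h

lemma negbox_mem_iff (J : Order.Ideal A) (hJ : J.IsPrime) (x : A) :
    neg (box x) ∈ J ↔ box x ∉ J := by
  constructor
  · intro h hb
    have hs : box x ⊔ neg (box x) ∈ J := Order.Ideal.sup_mem hb h
    rw [tma_box_sup_negbox] at hs
    exact hJ.toIsProper.top_notMem hs
  · intro h
    have hm : box x ⊓ neg (box x) ∈ J := by rw [tma_box_inf_negbox]; exact J.bot_mem
    rcases hJ.mem_or_mem hm with h' | h'
    · exact absurd h' h
    · exact h'

lemma inf_mem_iff (J : Order.Ideal A) (hJ : J.IsPrime) (x y : A) :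
    x ⊓ y ∈ J ↔ (x ∈ J ∨ y ∈ J) :=
  ⟨hJ.mem_or_mem, fun h => h.elim (fun h => J.lower inf_le_left h)
    (fun h => J.lower inf_le_right h)⟩

end Aux

lemma hom_val {A : Type*} [TMA A] (J : Order.Ideal A) (hJ : J.IsPrime)
    [DecidablePred (· ∈ J)] (w : ℕ → A) (β : Fm) :
    Fm.val (fun p => ((decide (TMA.neg (w p) ∈ J), decide (w p ∉ J)) : M4)) β
      = (decide (TMA.neg (Fm.val w β) ∈ J), decide (Fm.val w β ∉ J)) := by
  have htop : (⊤ : A) ∉ J := hJ.toIsProper.top_notMem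
  induction β with
  | var p => rfl
  | bot =>
    show (⊥ : M4) = _
    rw [Fm.val, tma_neg_bot]
    simp [htop, J.bot_mem]
    rfl
  | and α β ihα ihβ =>
    rw [Fm.val, Fm.val, ihα, ihβ]
    have h1 := inf_mem_iff J hJ (Fm.val w α) (Fm.val w β)
    have h2 : TMA.neg (Fm.val w α ⊓ Fm.val w β) ∈ J ↔
        (TMA.neg (Fm.val w α) ∈ J ∧ TMA.neg (Fm.val w β) ∈ J) := by
      rw [tma_neg_inf]; exact Order.Ideal.sup_mem_iff
    by_cases ha : Fm.val w α ∈ J <;> by_cases hb : Fm.val w β ∈ J <;>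
      by_cases hna : TMA.neg (Fm.val w α) ∈ J <;>
      by_cases hnb : TMA.neg (Fm.val w β) ∈ J <;>
      simp [h1, h2, ha, hb, hna, hnb, Prod.ext_iff]
  | or α β ihα ihβ =>
    rw [Fm.val, Fm.val, ihα, ihβ]
    have h1 : Fm.val w α ⊔ Fm.val w β ∈ J ↔ (Fm.val w α ∈ J ∧ Fm.val w β ∈ J) :=
      Order.Ideal.sup_mem_iff
    have h2 : TMA.neg (Fm.val w α ⊔ Fm.val w β) ∈ J ↔
        (TMA.neg (Fm.val w α) ∈ J ∨ TMA.neg (Fm.val w β) ∈ J) := by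
      rw [TMA.neg_sup]; exact inf_mem_iff J hJ _ _
    by_cases ha : Fm.val w α ∈ J <;> by_cases hb : Fm.val w β ∈ J <;>
      by_cases hna : TMA.neg (Fm.val w α) ∈ J <;>
      by_cases hnb : TMA.neg (Fm.val w β) ∈ J <;>
      simp [h1, h2, ha, hb, hna, hnb, Prod.ext_iff]
  | not α ihα =>
    rw [Fm.val, Fm.val, ihα]
    show (_, _) = _
    rw [TMA.neg_neg]
    by_cases ha : Fm.val w α ∈ J <;> by_cases hna : TMA.neg (Fm.val w α) ∈ J <;>
      simp [ha, hna, Prod.ext_iff]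
  | box α ihα =>
    rw [Fm.val, Fm.val, ihα]
    have h1 := box_mem_iff J hJ (Fm.val w α)
    have h2 := negbox_mem_iff J hJ (Fm.val w α)
    show (if _ = M4.one then M4.one else M4.zero) = _
    by_cases ha : Fm.val w α ∈ J <;> by_cases hna : TMA.neg (Fm.val w α) ∈ J <;>
      simp [h1, h2, ha, hna, Prod.ext_iff, M4.one, M4.zero]

/-- The degree-preserving logic TML is determined by the single matrix
`⟨M4m, {b,1}⟩`: for a finite set `Γ ∪ {α}` of formulas, the meet of the values of
`Γ` is below the value of `α` under every valuation into every TMA iff every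
valuation into `M4m` sending all of `Γ` into `{b,1}` sends `α` into `{b,1}`. -/
theorem stmt4 (Γ : Finset Fm) (α : Fm) :
    (∀ (A : Type) [TMA A] (w : ℕ → A), Γ.inf (Fm.val w) ≤ Fm.val w α) ↔
    (∀ v : ℕ → M4, (∀ γ ∈ Γ, Fm.val v γ = M4.b ∨ Fm.val v γ = M4.one) →
      (Fm.val v α = M4.b ∨ Fm.val v α = M4.one)) := by
  constructor
  · intro h1 v hv
    have hb : M4.b ≤ Γ.inf (Fm.val v) :=
      Finset.le_inf fun γ hγ => by rcases hv γ hγ with h | h <;> rw [h] <;> decide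
    have hle : M4.b ≤ Fm.val v α := le_trans hb (h1 M4 v)
    have key : ∀ x : M4, M4.b ≤ x → x = M4.b ∨ x = M4.one := by decide
    exact key _ hle
  · intro h2 A _ w
    by_contra hle
    classical
    set a := Γ.inf (Fm.val w) with ha_def
    set c := Fm.val w α with hc_def
    have hdisj : Disjoint ((Order.PFilter.principal a : Order.PFilter A) : Set A)
        ((Order.Ideal.principal c : Order.Ideal A) : Set A) := by
      rw [Set.disjoint_left]
      intro x hx hx'
      exact hle (le_trans hx hx')
    obtain ⟨J, hJp, hIJ, hFJ⟩ :=
      DistribLattice.prime_ideal_of_disjoint_filter_ideal hdisj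
    have hc : c ∈ J := hIJ Order.Ideal.mem_principal_self
    have ha : a ∉ J := fun h =>
      Set.disjoint_left.mp hFJ (Order.PFilter.mem_principal.mpr le_rfl) h
    set v : ℕ → M4 := fun p => ((decide (TMA.neg (w p) ∈ J), decide (w p ∉ J)) : M4)
      with hv_def
    have hval : ∀ β : Fm, Fm.val v β
        = (decide (TMA.neg (Fm.val w β) ∈ J), decide (Fm.val w β ∉ J)) :=
      hom_val J hJp w
    have hpair : ∀ x : Bool, ((x, true) : M4) = M4.b ∨ ((x, true) : M4) = M4.one := by
      decide
    have hΓ : ∀ γ ∈ Γ, Fm.val v γ = M4.b ∨ Fm.val v γ = M4.one := by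
      intro γ hγ
      have hnot : Fm.val w γ ∉ J := fun hmem =>
        ha (J.lower (Finset.inf_le hγ) hmem)
      rw [hval γ, decide_eq_true hnot]
      exact hpair _
    rcases h2 v hΓ with h | h <;> rw [hval α] at h <;>
      · have := congrArg Prod.snd h
        simp only [decide_eq_true_eq] at this
        exact absurd hc (by simpa [M4.b, M4.one] using this)
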